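/- Let (r_n)_{n≥0} be a sequence of non-negative real numbers, q ∈ (0,1), c > 0, and suppose r_{n+1} ≤ (1−q)·r_n + c·r_n² for all n ≥ 0. If r_0 < q/c, then for all n ≥ 0, r_{n+1} ≤ (1/(1+q))^{n+1} · (q·r_0)/(q − c·r_0). -/

import Mathlib

open Matrix Finset Filter

noncomputable section

abbrev EVec (d : ℕ) := EuclideanSpace ℝ (Fin d)

/-- The operator (spectral) norm of a real matrix, i.e. the norm of the induced
linear map between Euclidean spaces. -/
noncomputable def specNorm {m n : Type*} [Fintype m] [Fintype n] [DecidableEq n]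
    (A : Matrix m n ℝ) : ℝ :=
  ‖LinearMap.toContinuousLinearMap (Matrix.toEuclideanLin A)‖

/-- Matrix-vector multiplication on Euclidean space. -/
noncomputable def mulVecE {d : ℕ} (A : Matrix (Fin d) (Fin d) ℝ) (x : EVec d) : EVec d :=
  Matrix.toEuclideanLin A x

/-- Outer product `v · wᵀ` of two vectors. -/
def outer {d : ℕ} (v w : EVec d) : Matrix (Fin d) (Fin d) ℝ :=
  Matrix.of fun i j => v i * w j

/-- Lemma 3.1(b): if `r 0 < q / c`, then
`r (n+1) ≤ (1/(1+q))^(n+1) * (q * r 0) / (q - c * r 0)` for all `n ≥ 0`. -/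
theorem contraction_lemma_b (r : ℕ → ℝ) (q c : ℝ)
    (hq : q ∈ Set.Ioo (0 : ℝ) 1) (hc : 0 < c)
    (hnonneg : ∀ n, 0 ≤ r n)
    (hrec : ∀ n, r (n + 1) ≤ (1 - q) * r n + c * (r n) ^ 2)
    (h0 : r 0 < q / c) :
    ∀ n : ℕ, r (n + 1) ≤ (1 / (1 + q)) ^ (n + 1) * (q * r 0 / (q - c * r 0)) := by
  obtain ⟨hq0, hq1⟩ := hq
  have hx00 : c * r 0 < q := by
    have := (lt_div_iff₀ hc).mp h0
    linarith
  have key : ∀ n, c * r n < q ∧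
      c * r n / (q - c * r n) ≤ (1 / (1 + q)) ^ n * (c * r 0 / (q - c * r 0)) := by
    intro n
    induction n with
    | zero => exact ⟨hx00, by simp⟩
    | succ n ih =>
      obtain ⟨hx, hz⟩ := ih
      have hx0 : 0 ≤ c * r n := mul_nonneg hc.le (hnonneg n)
      have hqx : 0 < q - c * r n := by linarith
      have h1x : 0 < 1 + c * r n := by linarith
      have hcs : c * r (n + 1) ≤ (c * r n) * (1 - q + c * r n) := by
        nlinarith [hrec n]
      have hcs_lt : (c * r n) * (1 - q + c * r n) < q := by nlinarith
      have hlt : c * r (n + 1) < q := lt_of_le_of_lt hcs hcs_lt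
      refine ⟨hlt, ?_⟩
      have hd1 : 0 < q - c * r (n + 1) := by linarith
      have hr1 : 0 ≤ c * r (n + 1) := mul_nonneg hc.le (hnonneg (n + 1))
      have hden : (0:ℝ) < (q - c * r n) * (1 + c * r n) := mul_pos hqx h1x
      have step1 : c * r (n + 1) / (q - c * r (n + 1)) ≤
          (c * r n) * (1 - q + c * r n) / ((q - c * r n) * (1 + c * r n)) := by
        rw [div_le_div_iff₀ hd1 hden]
        nlinarith
      have step2 : (c * r n) * (1 - q + c * r n) / ((q - c * r n) * (1 + c * r n)) ≤
          (1 / (1 + q)) * (c * r n / (q - c * r n)) := by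
        have h1q : (0:ℝ) < 1 + q := by linarith
        have heq : (1 / (1 + q)) * (c * r n / (q - c * r n)) =
            c * r n / ((1 + q) * (q - c * r n)) := by
          field_simp
        rw [heq, div_le_div_iff₀ hden (mul_pos h1q hqx)]
        nlinarith [mul_nonneg (mul_nonneg hq0.le hx0) (mul_nonneg hqx.le hqx.le)]
      have step3 : (1 / (1 + q)) * (c * r n / (q - c * r n)) ≤
          (1 / (1 + q)) * ((1 / (1 + q)) ^ n * (c * r 0 / (q - c * r 0))) := by
        apply mul_le_mul_of_nonneg_left hz (by positivity)
      calc c * r (n + 1) / (q - c * r (n + 1)) ≤ _ := step1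
        _ ≤ _ := step2
        _ ≤ _ := step3
        _ = (1 / (1 + q)) ^ (n + 1) * (c * r 0 / (q - c * r 0)) := by ring
  intro n
  obtain ⟨hlt, hz⟩ := key (n + 1)
  have hd : 0 < q - c * r (n + 1) := by linarith
  have hd0 : 0 < q - c * r 0 := by linarith
  have h1 : r (n + 1) ≤ q * r (n + 1) / (q - c * r (n + 1)) := by
    rw [le_div_iff₀ hd]
    nlinarith [mul_nonneg (hnonneg (n+1)) (mul_nonneg hc.le (hnonneg (n+1)))]
  have h2 : q * r (n + 1) / (q - c * r (n + 1)) =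
      (q / c) * (c * r (n + 1) / (q - c * r (n + 1))) := by
    field_simp
  have h3 : (q / c) * (c * r (n + 1) / (q - c * r (n + 1))) ≤
      (q / c) * ((1 / (1 + q)) ^ (n + 1) * (c * r 0 / (q - c * r 0))) :=
    mul_le_mul_of_nonneg_left hz (by positivity)
  have h4 : (q / c) * ((1 / (1 + q)) ^ (n + 1) * (c * r 0 / (q - c * r 0))) =
      (1 / (1 + q)) ^ (n + 1) * (q * r 0 / (q - c * r 0)) := by
    field_simp
  calc r (n + 1) ≤ _ := h1
    _ = _ := h2
    _ ≤ _ := h3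
    _ = _ := h4
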